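/- Let R = diag(r,1,…,1) with r > 1 and Σ* = R + 𝟙𝟙ᵀ, M ≥ 2, λ' > 0. Then C := R^{-1/2}(Σ* − λ'I)R^{-1/2} = (1 − λ')I + A where A = aaᵀ + λ'(1 − 1/r)e₁e₁ᵀ, a = (1/√r, 1, …, 1)ᵀ, e₁ the first standard basis vector, and rank(A) = 2. -/

import Mathlib

open Matrix

/-- With `R = diag(r,1,…,1)`, `Σ* = R + 𝟙𝟙ᵀ`,
`C := R^{-1/2}(Σ* − λ'I)R^{-1/2} = (1 − λ')I + A` where
`A = aaᵀ + λ'(1 − 1/r)e₁e₁ᵀ`, `a = (1/√r, 1, …, 1)ᵀ`, and `rank A = 2`. -/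
theorem stmt18 (M : ℕ) (hM : 2 ≤ M) (r lam : ℝ) (hr : 1 < r) (hlam : 0 < lam) :
    (Matrix.diagonal (fun i : Fin M => if (i : ℕ) = 0 then (Real.sqrt r)⁻¹ else 1) *
        ((Matrix.diagonal (fun i : Fin M => if (i : ℕ) = 0 then r else 1) +
            Matrix.of fun _ _ : Fin M => (1 : ℝ)) - lam • 1) *
        Matrix.diagonal (fun i : Fin M => if (i : ℕ) = 0 then (Real.sqrt r)⁻¹ else 1) =
      (1 - lam) • (1 : Matrix (Fin M) (Fin M) ℝ) +
        (vecMulVec (fun i : Fin M => if (i : ℕ) = 0 then (Real.sqrt r)⁻¹ else 1)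
            (fun i : Fin M => if (i : ℕ) = 0 then (Real.sqrt r)⁻¹ else 1) +
          (lam * (1 - 1 / r)) •
            Matrix.of fun i j : Fin M =>
              if (i : ℕ) = 0 ∧ (j : ℕ) = 0 then (1 : ℝ) else 0)) ∧
    (vecMulVec (fun i : Fin M => if (i : ℕ) = 0 then (Real.sqrt r)⁻¹ else 1)
        (fun i : Fin M => if (i : ℕ) = 0 then (Real.sqrt r)⁻¹ else 1) +
      (lam * (1 - 1 / r)) •
        Matrix.of fun i j : Fin M =>
          if (i : ℕ) = 0 ∧ (j : ℕ) = 0 then (1 : ℝ) else 0).rank = 2 := by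
  haveI : NeZero M := ⟨by omega⟩
  have hr0 : (0:ℝ) < r := lt_trans one_pos hr
  have hs : Real.sqrt r * Real.sqrt r = r := Real.mul_self_sqrt hr0.le
  have hsne : Real.sqrt r ≠ 0 := by positivity
  have hinv : (Real.sqrt r)⁻¹ * (Real.sqrt r)⁻¹ = r⁻¹ := by
    rw [← mul_inv]; exact congrArg _ hs
  have hc : 0 < lam * (1 - 1 / r) := by
    have : 1 / r < 1 := by rw [div_lt_one hr0]; exact hr
    have h1 : 0 < 1 - 1 / r := by linarith
    exact mul_pos hlam h1
  set sc := Real.sqrt (lam * (1 - 1 / r)) with hsc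
  have hsc2 : sc * sc = lam * (1 - 1 / r) := Real.mul_self_sqrt hc.le
  constructor
  · ext i j
    rw [Matrix.mul_diagonal, Matrix.diagonal_mul]
    simp only [Matrix.sub_apply, Matrix.add_apply, Matrix.smul_apply, Matrix.one_apply,
      Matrix.diagonal_apply, Matrix.of_apply, Matrix.vecMulVec_apply, smul_eq_mul]
    by_cases hij : i = j
    · subst hij
      by_cases hi : (i : ℕ) = 0
      · simp [hi]
        field_simp
        rw [Real.sq_sqrt hr0.le]
        ring
      · simp [hi]
        ring
    · have hij' : ¬((i:ℕ) = 0 ∧ (j:ℕ) = 0) := by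
        rintro ⟨h1, h2⟩; exact hij (Fin.ext (h1.trans h2.symm))
      simp only [if_neg hij, if_neg hij']
      by_cases hi : (i : ℕ) = 0 <;> by_cases hj : (j : ℕ) = 0 <;>
        simp [hi, hj] <;> ring
  · set a : Fin M → ℝ := fun i => if (i : ℕ) = 0 then (Real.sqrt r)⁻¹ else 1 with ha
    set B : Matrix (Fin M) (Fin 2) ℝ :=
      Matrix.of fun i k => if k = 0 then a i else if (i : ℕ) = 0 then sc else 0 with hB
    have hAB : vecMulVec a a +
        (lam * (1 - 1 / r)) •
          (Matrix.of fun i j : Fin M =>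
            if (i : ℕ) = 0 ∧ (j : ℕ) = 0 then (1 : ℝ) else 0) = B * Bᵀ := by
      ext i j
      simp only [Matrix.add_apply, Matrix.smul_apply, Matrix.vecMulVec_apply, Matrix.of_apply,
        Matrix.mul_apply, Matrix.transpose_apply, Fin.sum_univ_two, hB, smul_eq_mul]
      have hsc2' : sc * sc = lam * (1 - r⁻¹) := by rw [hsc2, one_div]
      by_cases hi : (i : ℕ) = 0 <;> by_cases hj : (j : ℕ) = 0 <;>
        simp [hi, hj, hsc2'] <;> ring
    rw [hAB, Matrix.rank_self_mul_transpose, ← Matrix.rank_transpose_mul_self]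
    have hdet : (Bᵀ * B).det ≠ 0 := by
      have h00 : (Bᵀ * B) 0 0 = r⁻¹ + ((M : ℝ) - 1) := by
        simp only [Matrix.mul_apply, Matrix.transpose_apply, hB, Matrix.of_apply, if_pos rfl]
        have : ∀ i : Fin M, a i * a i = (if i = 0 then r⁻¹ - 1 else 0) + 1 := by
          intro i
          by_cases hi : (i : ℕ) = 0
          · have : i = 0 := Fin.ext (by simpa using hi)
            simp [this, ha, hinv]
          · have : i ≠ 0 := by simp [Fin.ext_iff, hi]
            simp [this, ha, hi]
        simp only [this, Finset.sum_add_distrib, Finset.sum_ite_eq', Finset.mem_univ, if_true,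
          Finset.sum_const, Finset.card_univ, Fintype.card_fin, nsmul_eq_mul, mul_one]
        ring
      have h01 : (Bᵀ * B) 0 1 = (Real.sqrt r)⁻¹ * sc := by
        simp only [Matrix.mul_apply, Matrix.transpose_apply, hB, Matrix.of_apply,
          if_pos (rfl : (0:Fin 2) = 0), if_neg (show (1:Fin 2) ≠ 0 by decide)]
        have : ∀ i : Fin M,
            a i * (if (i:ℕ) = 0 then sc else 0) =
            if i = 0 then (Real.sqrt r)⁻¹ * sc else 0 := by
          intro i
          by_cases hi : (i : ℕ) = 0
          · have : i = 0 := Fin.ext (by simpa using hi)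
            simp [this, ha]
          · have : i ≠ 0 := by simp [Fin.ext_iff, hi]
            simp [this, hi]
        simp only [this, Finset.sum_ite_eq', Finset.mem_univ, if_true]
      have h10 : (Bᵀ * B) 1 0 = (Real.sqrt r)⁻¹ * sc := by
        simp only [Matrix.mul_apply, Matrix.transpose_apply, hB, Matrix.of_apply,
          if_pos (rfl : (0:Fin 2) = 0), if_neg (show (1:Fin 2) ≠ 0 by decide)]
        have : ∀ i : Fin M,
            (if (i:ℕ) = 0 then sc else 0) * a i =
            if i = 0 then (Real.sqrt r)⁻¹ * sc else 0 := by
          intro i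
          by_cases hi : (i : ℕ) = 0
          · have : i = 0 := Fin.ext (by simpa using hi)
            simp [this, ha, mul_comm]
          · have : i ≠ 0 := by simp [Fin.ext_iff, hi]
            simp [this, hi]
        simp only [this, Finset.sum_ite_eq', Finset.mem_univ, if_true]
      have h11 : (Bᵀ * B) 1 1 = lam * (1 - 1 / r) := by
        simp only [Matrix.mul_apply, Matrix.transpose_apply, hB, Matrix.of_apply,
          if_neg (show (1:Fin 2) ≠ 0 by decide)]
        have : ∀ i : Fin M,
            (if (i:ℕ) = 0 then sc else 0) *
            (if (i:ℕ) = 0 then sc else 0) =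
            if i = 0 then lam * (1 - 1 / r) else 0 := by
          intro i
          by_cases hi : (i : ℕ) = 0
          · have : i = 0 := Fin.ext (by simpa using hi)
            simp [this, hi, hsc2]
          · have : i ≠ 0 := by simp [Fin.ext_iff, hi]
            simp [this, hi]
        simp only [this, Finset.sum_ite_eq', Finset.mem_univ, if_true]
      rw [Matrix.det_fin_two, h00, h01, h10, h11]
      have hM1 : (1:ℝ) ≤ (M : ℝ) - 1 := by
        have : (2:ℝ) ≤ (M : ℝ) := by exact_mod_cast hM
        linarith
      have : (r⁻¹ + ((M:ℝ) - 1)) * (lam * (1 - 1 / r)) -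
          (Real.sqrt r)⁻¹ * sc * ((Real.sqrt r)⁻¹ * sc) =
          ((M:ℝ) - 1) * (lam * (1 - 1 / r)) := by
        have : (Real.sqrt r)⁻¹ * sc * ((Real.sqrt r)⁻¹ * sc) = r⁻¹ * (lam * (1 - 1/r)) := by
          calc (Real.sqrt r)⁻¹ * sc * ((Real.sqrt r)⁻¹ * sc)
              = ((Real.sqrt r)⁻¹ * (Real.sqrt r)⁻¹) * (sc * sc) := by ring
            _ = r⁻¹ * (lam * (1 - 1/r)) := by rw [hinv, hsc2]
        rw [this]; ring
      rw [this]
      positivity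
    have hunit : IsUnit (Bᵀ * B) :=
      (Matrix.isUnit_iff_isUnit_det _).mpr (isUnit_iff_ne_zero.mpr hdet)
    rw [Matrix.rank_of_isUnit _ hunit]
    simp
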